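/- arXiv:1711.04839 — 2 statements merged into one kernel-verified Lean document; each statement's English description precedes it below -/
import Mathlib

section
/- Let d = m and f(x, ξ) := a(ξ_m − (ξ_{1:m−1}; 1)ᵀx)² with a > 0, where ξ_{1:m−1} denotes ξ without its last component and (ξ_{1:m−1}; 1) ∈ ℝ^m appends a 1, and let C := {(x_v, λ_v) ∈ ℝ^{nd} × ℝ_{≥0}ⁿ : λ^i ≥ a‖(x^i_{1:m−1}; 1)‖² for all i ∈ {1, …, n}}. Then C is closed and convex with nonempty interior, and L̃_aug is convex-concave on C × (ℝⁿ × ℝ^{nd} × ℝ^{mN}): for each fixed (ν, η, {ξ^k}), the map (x_v, λ_v) ↦ L̃_aug is convex on C, and for each fixed (x_v, λ_v) ∈ C, the map (ν, η, {ξ^k}) ↦ L̃_aug is concave on ℝⁿ × ℝ^{nd} × ℝ^{mN}. -/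
open scoped BigOperators RealInnerProductSpace
open Finset

noncomputable section

/-- `d`-dimensional Euclidean space. -/
abbrev Vec (d : ℕ) := EuclideanSpace ℝ (Fin d)

/-- g_k(x, λ, ξ) := f(x, ξ) − λ‖ξ − ξ̂ᵏ‖². -/
def gk {d m N : ℕ} (f : Vec d → Vec m → ℝ) (ξhat : Fin N → Vec m) (k : Fin N)
    (x : Vec d) (lam : ℝ) (ξ : Vec m) : ℝ :=
  f x ξ - lam * ‖ξ - ξhat k‖ ^ 2

/-- Centralized objective J(x, λ) := λε² + (1/N) Σ_k sup_ξ g_k(x, λ, ξ), in extended reals. -/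
def Jobj {d m N : ℕ} (ε : ℝ) (f : Vec d → Vec m → ℝ) (ξhat : Fin N → Vec m)
    (x : Vec d) (lam : ℝ) : EReal :=
  ((lam * ε ^ 2 : ℝ) : EReal)
    + ((1 / (N : ℝ) : ℝ) : EReal) *
        ∑ k : Fin N, ⨆ ξ : Vec m, ((gk f ξhat k x lam ξ : ℝ) : EReal)

/-- Distributed objective F(x_v, λ_v), in extended reals. -/
def Fobj {d m n N : ℕ} (ε : ℝ) (f : Vec d → Vec m → ℝ) (ξhat : Fin N → Vec m)
    (v : Fin N → Fin n) (xv : Fin n → Vec d) (lv : Fin n → ℝ) : EReal :=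
  ((ε ^ 2 / (n : ℝ) * ∑ i, lv i : ℝ) : EReal)
    + ((1 / (N : ℝ) : ℝ) : EReal) *
        ∑ k : Fin N, ⨆ ξ : Vec m, ((gk f ξhat k (xv (v k)) (lv (v k)) ξ : ℝ) : EReal)

/-- Feasible set of the distributed problem: λ_v ≥ 0, 𝖫λ_v = 0, (𝖫 ⊗ I_d)x_v = 0. -/
def Feas {d n : ℕ} (Lap : Matrix (Fin n) (Fin n) ℝ) :
    Set ((Fin n → Vec d) × (Fin n → ℝ)) :=
  {p | (∀ i, 0 ≤ p.2 i) ∧ Lap.mulVec p.2 = 0 ∧ ∀ i : Fin n, ∑ j : Fin n, Lap i j • p.1 j = 0}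

/-- Lagrangian L(x_v, λ_v, ν, η) := F(x_v, λ_v) + νᵀ𝖫λ_v + ηᵀ(𝖫 ⊗ I_d)x_v. -/
def Lagr {d m n N : ℕ} (ε : ℝ) (f : Vec d → Vec m → ℝ) (ξhat : Fin N → Vec m)
    (v : Fin N → Fin n) (Lap : Matrix (Fin n) (Fin n) ℝ)
    (xv : Fin n → Vec d) (lv : Fin n → ℝ) (ν : Fin n → ℝ) (η : Fin n → Vec d) : EReal :=
  Fobj ε f ξhat v xv lv
    + ((∑ i, ν i * Lap.mulVec lv i
        + ∑ i, (inner ℝ (η i) (∑ j : Fin n, Lap i j • xv j) : ℝ) : ℝ) : EReal)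

/-- Augmented Lagrangian L_aug := L + (1/2)x_vᵀ(𝖫 ⊗ I_d)x_v + (1/2)λ_vᵀ𝖫λ_v. -/
def LagrAug {d m n N : ℕ} (ε : ℝ) (f : Vec d → Vec m → ℝ) (ξhat : Fin N → Vec m)
    (v : Fin N → Fin n) (Lap : Matrix (Fin n) (Fin n) ℝ)
    (xv : Fin n → Vec d) (lv : Fin n → ℝ) (ν : Fin n → ℝ) (η : Fin n → Vec d) : EReal :=
  Lagr ε f ξhat v Lap xv lv ν η
    + (((1 / 2 : ℝ) * ∑ i, (inner ℝ (xv i) (∑ j : Fin n, Lap i j • xv j) : ℝ)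
        + (1 / 2 : ℝ) * ∑ i, lv i * Lap.mulVec lv i : ℝ) : EReal)

/-- L̃_aug(x_v, λ_v, ν, η, {ξ^k}), real-valued. -/
def Ltld {d m n N : ℕ} (ε : ℝ) (f : Vec d → Vec m → ℝ) (ξhat : Fin N → Vec m)
    (v : Fin N → Fin n) (Lap : Matrix (Fin n) (Fin n) ℝ)
    (xv : Fin n → Vec d) (lv : Fin n → ℝ) (ν : Fin n → ℝ) (η : Fin n → Vec d)
    (ξs : Fin N → Vec m) : ℝ :=
  ε ^ 2 / (n : ℝ) * ∑ i, lv i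
    + (1 / (N : ℝ)) * ∑ k : Fin N, gk f ξhat k (xv (v k)) (lv (v k)) (ξs k)
    + ∑ i, ν i * Lap.mulVec lv i
    + ∑ i, (inner ℝ (η i) (∑ j : Fin n, Lap i j • xv j) : ℝ)
    + (1 / 2 : ℝ) * ∑ i, (inner ℝ (xv i) (∑ j : Fin n, Lap i j • xv j) : ℝ)
    + (1 / 2 : ℝ) * ∑ i, lv i * Lap.mulVec lv i


section AuxHelpers

open Finset

variable {E F' : Type*} [AddCommGroup E] [Module ℝ E] [AddCommGroup F'] [Module ℝ F']

lemma convexOn_univ_of_affine' {A : E → ℝ}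
    (h : ∀ x y : E, ∀ s t : ℝ, s + t = 1 → A (s•x + t•y) = s * A x + t * A y) :
    ConvexOn ℝ Set.univ A :=
  ⟨convex_univ, fun x _ y _ s t _ _ hst => by rw [h x y s t hst]; simp [smul_eq_mul]⟩

lemma concaveOn_univ_of_affine' {A : E → ℝ}
    (h : ∀ x y : E, ∀ s t : ℝ, s + t = 1 → A (s•x + t•y) = s * A x + t * A y) :
    ConcaveOn ℝ Set.univ A :=
  ⟨convex_univ, fun x _ y _ s t _ _ hst => by rw [h x y s t hst]; simp [smul_eq_mul]⟩

lemma convexOn_univ_quad' {Q : E → ℝ}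
    (hid : ∀ x y : E, ∀ s t : ℝ, s + t = 1 → Q (s•x+t•y) = s * Q x + t * Q y - s*t*Q (x - y))
    (hpos : ∀ z, 0 ≤ Q z) : ConvexOn ℝ Set.univ Q :=
  ⟨convex_univ, fun x _ y _ s t hs ht hst => by
    rw [hid x y s t hst]
    have := mul_nonneg (mul_nonneg hs ht) (hpos (x-y))
    simp only [smul_eq_mul]; linarith⟩

lemma convexOn_univ_sq_affine' {A : E → ℝ} {a : ℝ} (ha : 0 ≤ a)
    (h : ∀ x y : E, ∀ s t : ℝ, s + t = 1 → A (s•x + t•y) = s * A x + t * A y) :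
    ConvexOn ℝ Set.univ (fun x => a * (A x)^2) :=
  ⟨convex_univ, fun x _ y _ s t hs ht hst => by
    simp only [smul_eq_mul]
    rw [h x y s t hst]
    have ht' : t = 1 - s := by linarith
    subst ht'
    nlinarith [mul_nonneg (mul_nonneg ha (mul_nonneg hs ht)) (sq_nonneg (A x - A y))]⟩

lemma convexOn_comp_affine' {T : E → F'}
    (hT : ∀ x y : E, ∀ s t : ℝ, 0 ≤ s → 0 ≤ t → s + t = 1 → T (s•x+t•y) = s•T x + t•T y)
    {g : F' → ℝ} (hg : ConvexOn ℝ Set.univ g) : ConvexOn ℝ Set.univ (fun x => g (T x)) :=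
  ⟨convex_univ, fun x _ y _ s t hs ht hst => by
    show g (T (s•x+t•y)) ≤ s • g (T x) + t • g (T y)
    rw [hT x y s t hs ht hst]
    exact hg.2 (Set.mem_univ _) (Set.mem_univ _) hs ht hst⟩

lemma concaveOn_comp_affine' {T : E → F'}
    (hT : ∀ x y : E, ∀ s t : ℝ, 0 ≤ s → 0 ≤ t → s + t = 1 → T (s•x+t•y) = s•T x + t•T y)
    {g : F' → ℝ} (hg : ConcaveOn ℝ Set.univ g) : ConcaveOn ℝ Set.univ (fun x => g (T x)) :=
  ⟨convex_univ, fun x _ y _ s t hs ht hst => by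
    show s • g (T x) + t • g (T y) ≤ g (T (s•x+t•y))
    rw [hT x y s t hs ht hst]
    exact hg.2 (Set.mem_univ _) (Set.mem_univ _) hs ht hst⟩

lemma convexOn_finset_sum' {ι : Type*} (t : Finset ι) {f : ι → E → ℝ}
    (h : ∀ i ∈ t, ConvexOn ℝ Set.univ (f i)) :
    ConvexOn ℝ Set.univ (fun x => ∑ i ∈ t, f i x) := by
  classical
  induction t using Finset.induction_on with
  | empty => simpa using convexOn_const (0:ℝ) convex_univ
  | insert _ _ hnot ih =>
    simp only [Finset.sum_insert hnot]
    exact (h _ (Finset.mem_insert_self _ _)).add (ih fun i hi => h i (Finset.mem_insert_of_mem hi))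

lemma concaveOn_finset_sum' {ι : Type*} (t : Finset ι) {f : ι → E → ℝ}
    (h : ∀ i ∈ t, ConcaveOn ℝ Set.univ (f i)) :
    ConcaveOn ℝ Set.univ (fun x => ∑ i ∈ t, f i x) := by
  classical
  induction t using Finset.induction_on with
  | empty => simpa using concaveOn_const (0:ℝ) convex_univ
  | insert _ _ hnot ih =>
    simp only [Finset.sum_insert hnot]
    exact (h _ (Finset.mem_insert_self _ _)).add (ih fun i hi => h i (Finset.mem_insert_of_mem hi))

lemma convexOn_smul_const' {g : E → ℝ} (hg : ConvexOn ℝ Set.univ g) {c : ℝ} (hc : 0 ≤ c) :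
    ConvexOn ℝ Set.univ (fun x => c * g x) := by
  simpa [smul_eq_mul] using hg.smul hc

lemma concaveOn_smul_const' {g : E → ℝ} (hg : ConcaveOn ℝ Set.univ g) {c : ℝ} (hc : 0 ≤ c) :
    ConcaveOn ℝ Set.univ (fun x => c * g x) := by
  simpa [smul_eq_mul] using hg.smul hc

end AuxHelpers

section QuadHelpers

open Finset

/-- double-sum bilinear form with matrix L on families of vectors -/
def qlapAux {n d : ℕ} (L : Matrix (Fin n) (Fin n) ℝ) (z w : Fin n → Vec d) : ℝ :=
  ∑ i, ∑ j, L i j * (inner ℝ (z i) (w j) : ℝ)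

lemma qlapAux_eq {n d : ℕ} (L : Matrix (Fin n) (Fin n) ℝ) (z w : Fin n → Vec d) :
    ∑ i, (inner ℝ (z i) (∑ j, L i j • w j) : ℝ) = qlapAux L z w := by
  refine Finset.sum_congr rfl fun i _ => ?_
  rw [inner_sum]
  exact Finset.sum_congr rfl fun j _ => real_inner_smul_right _ _ _

lemma qlapAux_expand {n d : ℕ} (L : Matrix (Fin n) (Fin n) ℝ) (s t : ℝ) (x y : Fin n → Vec d) :
    qlapAux L (s • x + t • y) (s • x + t • y)
      = s*s*qlapAux L x x + s*t*qlapAux L x y + s*t*qlapAux L y x + t*t*qlapAux L y y := by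
  unfold qlapAux
  have h : ∀ i j : Fin n, L i j * (inner ℝ ((s • x + t • y) i) ((s • x + t • y) j) : ℝ)
      = s*s*(L i j * (inner ℝ (x i) (x j) : ℝ)) + s*t*(L i j * (inner ℝ (x i) (y j) : ℝ))
        + s*t*(L i j * (inner ℝ (y i) (x j) : ℝ)) + t*t*(L i j * (inner ℝ (y i) (y j) : ℝ)) := by
    intro i j
    simp only [Pi.add_apply, Pi.smul_apply, inner_add_left, inner_add_right,
      real_inner_smul_left, real_inner_smul_right]
    ring
  simp only [h, Finset.sum_add_distrib, Finset.mul_sum]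

lemma qlapAux_sub_expand {n d : ℕ} (L : Matrix (Fin n) (Fin n) ℝ) (x y : Fin n → Vec d) :
    qlapAux L (x - y) (x - y) = qlapAux L x x - qlapAux L x y - qlapAux L y x + qlapAux L y y := by
  unfold qlapAux
  have h : ∀ i j : Fin n, L i j * (inner ℝ ((x - y) i) ((x - y) j) : ℝ)
      = L i j * (inner ℝ (x i) (x j) : ℝ) - L i j * (inner ℝ (x i) (y j) : ℝ)
        - L i j * (inner ℝ (y i) (x j) : ℝ) + L i j * (inner ℝ (y i) (y j) : ℝ) := by
    intro i j
    simp only [Pi.sub_apply, inner_sub_left, inner_sub_right]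
    ring
  simp only [h, Finset.sum_add_distrib, Finset.sum_sub_distrib]

lemma qlapAux_comm {n d : ℕ} {L : Matrix (Fin n) (Fin n) ℝ} (hL : L.IsSymm)
    (x y : Fin n → Vec d) : qlapAux L y x = qlapAux L x y := by
  unfold qlapAux
  rw [Finset.sum_comm]
  exact Finset.sum_congr rfl fun i _ => Finset.sum_congr rfl fun j _ => by
    rw [hL.apply, real_inner_comm]

lemma qlapAux_nonneg {n d : ℕ} {L : Matrix (Fin n) (Fin n) ℝ} (hL : L.PosSemidef)
    (z : Fin n → Vec d) : 0 ≤ qlapAux L z z := by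
  unfold qlapAux
  have h : ∀ i j : Fin n, L i j * (inner ℝ (z i) (z j) : ℝ) = ∑ c, L i j * (z i c * z j c) := by
    intro i j
    rw [PiLp.inner_apply]
    simp [Finset.mul_sum, mul_comm]
  calc (0:ℝ) ≤ ∑ c : Fin d, ∑ i, ∑ j, L i j * (z i c * z j c) := by
        refine Finset.sum_nonneg fun c _ => ?_
        have h2 := hL.dotProduct_mulVec_nonneg (fun i => z i c)
        have : dotProduct (star (fun i => z i c)) (L.mulVec (fun i => z i c))
            = ∑ i, ∑ j, L i j * (z i c * z j c) := by
          simp only [dotProduct, Matrix.mulVec, star_trivial, Finset.mul_sum]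
          exact Finset.sum_congr rfl fun i _ => Finset.sum_congr rfl fun j _ => by ring
        linarith [this ▸ h2]
    _ = ∑ i, ∑ j, L i j * (inner ℝ (z i) (z j) : ℝ) := by
        rw [Finset.sum_comm]
        refine Finset.sum_congr rfl fun i _ => ?_
        rw [Finset.sum_comm]
        exact Finset.sum_congr rfl fun j _ => (h i j).symm

/-- scalar quadratic form -/
def qsAux {n : ℕ} (L : Matrix (Fin n) (Fin n) ℝ) (z w : Fin n → ℝ) : ℝ :=
  ∑ i, ∑ j, L i j * (z i * w j)

lemma qsAux_eq {n : ℕ} (L : Matrix (Fin n) (Fin n) ℝ) (z w : Fin n → ℝ) :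
    ∑ i, z i * L.mulVec w i = qsAux L z w := by
  refine Finset.sum_congr rfl fun i _ => ?_
  simp only [Matrix.mulVec, dotProduct, Finset.mul_sum]
  exact Finset.sum_congr rfl fun j _ => by ring

lemma qsAux_expand {n : ℕ} (L : Matrix (Fin n) (Fin n) ℝ) (s t : ℝ) (x y : Fin n → ℝ) :
    qsAux L (s • x + t • y) (s • x + t • y)
      = s*s*qsAux L x x + s*t*qsAux L x y + s*t*qsAux L y x + t*t*qsAux L y y := by
  unfold qsAux
  have h : ∀ i j : Fin n, L i j * ((s • x + t • y) i * (s • x + t • y) j)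
      = s*s*(L i j * (x i * x j)) + s*t*(L i j * (x i * y j))
        + s*t*(L i j * (y i * x j)) + t*t*(L i j * (y i * y j)) := by
    intro i j
    simp only [Pi.add_apply, Pi.smul_apply, smul_eq_mul]
    ring
  simp only [h, Finset.sum_add_distrib, Finset.mul_sum]

lemma qsAux_sub_expand {n : ℕ} (L : Matrix (Fin n) (Fin n) ℝ) (x y : Fin n → ℝ) :
    qsAux L (x - y) (x - y) = qsAux L x x - qsAux L x y - qsAux L y x + qsAux L y y := by
  unfold qsAux
  have h : ∀ i j : Fin n, L i j * ((x - y) i * (x - y) j)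
      = L i j * (x i * x j) - L i j * (x i * y j) - L i j * (y i * x j) + L i j * (y i * y j) := by
    intro i j; simp only [Pi.sub_apply]; ring
  simp only [h, Finset.sum_add_distrib, Finset.sum_sub_distrib]

lemma qsAux_comm {n : ℕ} {L : Matrix (Fin n) (Fin n) ℝ} (hL : L.IsSymm) (x y : Fin n → ℝ) :
    qsAux L y x = qsAux L x y := by
  unfold qsAux
  rw [Finset.sum_comm]
  exact Finset.sum_congr rfl fun i _ => Finset.sum_congr rfl fun j _ => by
    rw [hL.apply]; ring

lemma qsAux_nonneg {n : ℕ} {L : Matrix (Fin n) (Fin n) ℝ} (hL : L.PosSemidef) (z : Fin n → ℝ) :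
    0 ≤ qsAux L z z := by
  have h2 := hL.dotProduct_mulVec_nonneg z
  have : dotProduct (star z) (L.mulVec z) = qsAux L z z := by
    simp only [dotProduct, Matrix.mulVec, star_trivial, Finset.mul_sum, qsAux]
    exact Finset.sum_congr rfl fun i _ => Finset.sum_congr rfl fun j _ => by ring
  linarith [this ▸ h2]

lemma norm_sq_eq_sumAux {d : ℕ} (z : Vec d) : ‖z‖^2 = ∑ j, (z j)^2 := by
  rw [EuclideanSpace.norm_eq, Real.sq_sqrt (by positivity)]
  exact Finset.sum_congr rfl fun j _ => sq_abs _

lemma ls_concaveOnAux {M : ℕ} {a lam : ℝ} (ha : 0 ≤ a) (x c : Vec (M+1))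
    (hl : a * ((∑ j : Fin M, x (Fin.castSucc j)^2) + 1) ≤ lam) :
    ConcaveOn ℝ Set.univ (fun ξ : Vec (M+1) =>
      a * (ξ (Fin.last M)
        - ((∑ i : Fin M, ξ (Fin.castSucc i) * x (Fin.castSucc i)) + x (Fin.last M))) ^ 2
        - lam * ‖ξ - c‖ ^ 2) := by
  refine ⟨convex_univ, fun ξ1 _ ξ2 _ s t hs ht hst => ?_⟩
  have ht' : t = 1 - s := by linarith
  subst ht'
  simp only [smul_eq_mul]
  set A1 : ℝ := ξ1 (Fin.last M)
      - ((∑ i : Fin M, ξ1 (Fin.castSucc i) * x (Fin.castSucc i)) + x (Fin.last M)) with hA1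
  set A2 : ℝ := ξ2 (Fin.last M)
      - ((∑ i : Fin M, ξ2 (Fin.castSucc i) * x (Fin.castSucc i)) + x (Fin.last M)) with hA2
  have hmidA : (s • ξ1 + (1-s) • ξ2) (Fin.last M)
      - ((∑ i : Fin M, (s • ξ1 + (1-s) • ξ2) (Fin.castSucc i) * x (Fin.castSucc i))
        + x (Fin.last M)) = s * A1 + (1-s) * A2 := by
    simp only [PiLp.add_apply, PiLp.smul_apply, smul_eq_mul, hA1, hA2]
    have hsum : ∑ i : Fin M, (s * ξ1 (Fin.castSucc i) + (1-s) * ξ2 (Fin.castSucc i))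
          * x (Fin.castSucc i)
        = s * ∑ i : Fin M, ξ1 (Fin.castSucc i) * x (Fin.castSucc i)
          + (1-s) * ∑ i : Fin M, ξ2 (Fin.castSucc i) * x (Fin.castSucc i) := by
      rw [Finset.mul_sum, Finset.mul_sum, ← Finset.sum_add_distrib]
      exact Finset.sum_congr rfl fun i _ => by ring
    rw [hsum]; ring
  have hmid : (s • ξ1 + (1-s) • ξ2) - c = s • (ξ1 - c) + (1-s) • (ξ2 - c) := by module
  have huw : ξ1 - ξ2 = (ξ1 - c) - (ξ2 - c) := by module
  have hQ : ‖(s • ξ1 + (1-s) • ξ2) - c‖^2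
      = s * ‖ξ1 - c‖^2 + (1-s) * ‖ξ2 - c‖^2 - s*(1-s)*‖ξ1 - ξ2‖^2 := by
    rw [hmid, huw]
    set u := ξ1 - c
    set w := ξ2 - c
    have e1 : ‖s • u + (1-s) • w‖^2
        = s^2*(inner ℝ u u : ℝ) + 2*(s*(1-s))*(inner ℝ u w : ℝ) + (1-s)^2*(inner ℝ w w : ℝ) := by
      rw [← real_inner_self_eq_norm_sq]
      simp only [inner_add_left, inner_add_right, real_inner_smul_left, real_inner_smul_right,
        real_inner_comm w u]
      ring
    have e2 : ‖u - w‖^2 = (inner ℝ u u : ℝ) - 2*(inner ℝ u w : ℝ) + (inner ℝ w w : ℝ) := by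
      rw [← real_inner_self_eq_norm_sq]
      simp only [inner_sub_left, inner_sub_right, real_inner_comm w u]
      ring
    rw [e1, e2, ← real_inner_self_eq_norm_sq u, ← real_inner_self_eq_norm_sq w]
    ring
  have key : a * (A1 - A2)^2 ≤ lam * ‖ξ1 - ξ2‖^2 := by
    set dd : Fin (M+1) → ℝ := fun j => ξ1 j - ξ2 j with hdd
    set b : Fin (M+1) → ℝ := Fin.snoc (fun i : Fin M => -(x (Fin.castSucc i))) 1 with hb
    have hnormd : ‖ξ1 - ξ2‖^2 = ∑ j, dd j ^ 2 := by
      rw [norm_sq_eq_sumAux]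
      exact Finset.sum_congr rfl fun j _ => by rw [PiLp.sub_apply]
    have hbsq : ∑ j, b j ^ 2 = (∑ i : Fin M, x (Fin.castSucc i)^2) + 1 := by
      rw [Fin.sum_univ_castSucc]
      simp [hb, Fin.snoc_castSucc, Fin.snoc_last]
    have hx : ∑ i : Fin M, -(x (Fin.castSucc i)) * dd (Fin.castSucc i)
        = (∑ i : Fin M, ξ2 (Fin.castSucc i) * x (Fin.castSucc i))
          - (∑ i : Fin M, ξ1 (Fin.castSucc i) * x (Fin.castSucc i)) := by
      rw [← Finset.sum_sub_distrib]
      exact Finset.sum_congr rfl fun i _ => by simp only [hdd]; ring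
    have hAd : A1 - A2 = ∑ j, b j * dd j := by
      rw [Fin.sum_univ_castSucc]
      simp only [hb, Fin.snoc_castSucc, Fin.snoc_last, one_mul]
      rw [hx]
      simp only [hdd, hA1, hA2]
      ring
    have h0 : 0 ≤ ∑ j, dd j ^ 2 := Finset.sum_nonneg fun _ _ => sq_nonneg _
    have hcs := Finset.sum_mul_sq_le_sq_mul_sq Finset.univ b dd
    rw [hAd, hnormd]
    have h1 := mul_le_mul_of_nonneg_left hcs ha
    rw [hbsq] at h1
    nlinarith [h1, mul_le_mul_of_nonneg_right hl h0]
  rw [hQ, hmidA]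
  nlinarith [mul_nonneg (mul_nonneg hs ht) (sub_nonneg.2 key)]

end QuadHelpers

/-- for the least-squares loss f(x, ξ) = a(ξ_m − (ξ_{1:m−1}; 1)ᵀx)²
(d = m = M + 1) and C = {(x_v, λ_v) : λ_v ≥ 0, λ^i ≥ a‖(x^i_{1:m−1}; 1)‖² ∀i},
the set C is closed and convex with nonempty interior, and L̃_aug is convex-concave
on C × (ℝⁿ × ℝ^{nd} × ℝ^{mN}). -/
theorem Ltld_convex_concave_of_least_squares_f
    {M n N : ℕ} (hn : 0 < n) (hN : 0 < N)
    (a : ℝ) (ha : 0 < a)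
    (f : Vec (M + 1) → Vec (M + 1) → ℝ)
    (hf : ∀ (x ξ : Vec (M + 1)),
      f x ξ = a * (ξ (Fin.last M)
        - ((∑ i : Fin M, ξ (Fin.castSucc i) * x (Fin.castSucc i)) + x (Fin.last M))) ^ 2)
    (ξhat : Fin N → Vec (M + 1)) (ε : ℝ) (hε : 0 < ε)
    (v : Fin N → Fin n) (hv : Function.Surjective v)
    (Lap : Matrix (Fin n) (Fin n) ℝ) (hLsym : Lap.IsSymm) (hLpsd : Lap.PosSemidef)
    (hLker : ∀ w : Fin n → ℝ, Lap.mulVec w = 0 ↔ ∃ c : ℝ, w = fun _ => c) :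
    IsClosed {p : (Fin n → Vec (M + 1)) × (Fin n → ℝ) | (∀ i, 0 ≤ p.2 i) ∧
        ∀ i, a * ((∑ j : Fin M, (p.1 i (Fin.castSucc j)) ^ 2) + 1) ≤ p.2 i} ∧
    Convex ℝ {p : (Fin n → Vec (M + 1)) × (Fin n → ℝ) | (∀ i, 0 ≤ p.2 i) ∧
        ∀ i, a * ((∑ j : Fin M, (p.1 i (Fin.castSucc j)) ^ 2) + 1) ≤ p.2 i} ∧
    (interior {p : (Fin n → Vec (M + 1)) × (Fin n → ℝ) | (∀ i, 0 ≤ p.2 i) ∧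
        ∀ i, a * ((∑ j : Fin M, (p.1 i (Fin.castSucc j)) ^ 2) + 1) ≤ p.2 i}).Nonempty ∧
    (∀ (ν : Fin n → ℝ) (η : Fin n → Vec (M + 1)) (ξs : Fin N → Vec (M + 1)),
      ConvexOn ℝ {p : (Fin n → Vec (M + 1)) × (Fin n → ℝ) | (∀ i, 0 ≤ p.2 i) ∧
          ∀ i, a * ((∑ j : Fin M, (p.1 i (Fin.castSucc j)) ^ 2) + 1) ≤ p.2 i}
        (fun p => Ltld ε f ξhat v Lap p.1 p.2 ν η ξs)) ∧
    (∀ (xv : Fin n → Vec (M + 1)) (lv : Fin n → ℝ), (∀ i, 0 ≤ lv i) →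
      (∀ i, a * ((∑ j : Fin M, (xv i (Fin.castSucc j)) ^ 2) + 1) ≤ lv i) →
      ConcaveOn ℝ Set.univ
        (fun q : (Fin n → ℝ) × (Fin n → Vec (M + 1)) × (Fin N → Vec (M + 1)) =>
          Ltld ε f ξhat v Lap xv lv q.1 q.2.1 q.2.2)) := by
  classical
  set S : Set ((Fin n → Vec (M + 1)) × (Fin n → ℝ)) :=
    {p : (Fin n → Vec (M + 1)) × (Fin n → ℝ) | (∀ i, 0 ≤ p.2 i) ∧
        ∀ i, a * ((∑ j : Fin M, (p.1 i (Fin.castSucc j)) ^ 2) + 1) ≤ p.2 i} with hS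
  -- convexity of S
  have hSconv : Convex ℝ S := by
    intro p hp q hq s t hs ht hst
    have hp' : (∀ i, 0 ≤ p.2 i) ∧
        ∀ i, a * ((∑ j : Fin M, (p.1 i (Fin.castSucc j)) ^ 2) + 1) ≤ p.2 i := hp
    have hq' : (∀ i, 0 ≤ q.2 i) ∧
        ∀ i, a * ((∑ j : Fin M, (q.1 i (Fin.castSucc j)) ^ 2) + 1) ≤ q.2 i := hq
    constructor
    · intro i
      show 0 ≤ s * p.2 i + t * q.2 i
      exact add_nonneg (mul_nonneg hs (hp'.1 i)) (mul_nonneg ht (hq'.1 i))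
    · intro i
      show a * ((∑ j : Fin M,
          (s * p.1 i (Fin.castSucc j) + t * q.1 i (Fin.castSucc j)) ^ 2) + 1)
        ≤ s * p.2 i + t * q.2 i
      have h1 : ∀ j : Fin M, (s * p.1 i (Fin.castSucc j) + t * q.1 i (Fin.castSucc j))^2
          ≤ s * (p.1 i (Fin.castSucc j))^2 + t * (q.1 i (Fin.castSucc j))^2 := by
        intro j
        nlinarith [sq_nonneg (p.1 i (Fin.castSucc j) - q.1 i (Fin.castSucc j)),
          mul_nonneg hs ht, sq_nonneg (s * p.1 i (Fin.castSucc j) - t * q.1 i (Fin.castSucc j))]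
      have hsum : (∑ j : Fin M, (s * p.1 i (Fin.castSucc j) + t * q.1 i (Fin.castSucc j))^2)
          ≤ s * (∑ j : Fin M, (p.1 i (Fin.castSucc j))^2)
            + t * (∑ j : Fin M, (q.1 i (Fin.castSucc j))^2) := by
        rw [Finset.mul_sum, Finset.mul_sum, ← Finset.sum_add_distrib]
        exact Finset.sum_le_sum fun j _ => h1 j
      nlinarith [mul_le_mul_of_nonneg_left (hp'.2 i) hs, mul_le_mul_of_nonneg_left (hq'.2 i) ht,
        mul_le_mul_of_nonneg_left hsum ha.le]
  -- continuity of the constraint functions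
  have hcont : ∀ i : Fin n, Continuous (fun p : (Fin n → Vec (M + 1)) × (Fin n → ℝ) =>
      a * ((∑ j : Fin M, (p.1 i (Fin.castSucc j)) ^ 2) + 1)) := by
    intro i
    refine continuous_const.mul (Continuous.add ?_ continuous_const)
    refine continuous_finset_sum _ fun j _ => ?_
    exact ((EuclideanSpace.proj (Fin.castSucc j)).continuous.comp
      ((continuous_apply i).comp continuous_fst)).pow 2
  have hcont2 : ∀ i : Fin n, Continuous (fun p : (Fin n → Vec (M + 1)) × (Fin n → ℝ) =>
      p.2 i) := fun i => (continuous_apply i).comp continuous_snd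
  refine ⟨?_, hSconv, ?_, ?_, ?_⟩
  -- closedness
  · have : S = (⋂ i, {p : (Fin n → Vec (M + 1)) × (Fin n → ℝ) | 0 ≤ p.2 i})
        ∩ ⋂ i, {p : (Fin n → Vec (M + 1)) × (Fin n → ℝ) |
            a * ((∑ j : Fin M, (p.1 i (Fin.castSucc j)) ^ 2) + 1) ≤ p.2 i} := by
      ext p
      simp only [hS, Set.mem_setOf_eq, Set.mem_inter_iff, Set.mem_iInter]
    rw [this]
    exact IsClosed.inter (isClosed_iInter fun i => isClosed_le continuous_const (hcont2 i))
      (isClosed_iInter fun i => isClosed_le (hcont i) (hcont2 i))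
  -- nonempty interior
  · refine ⟨(fun _ => (0 : Vec (M + 1)), fun _ => a + 1), ?_⟩
    have hU : IsOpen {p : (Fin n → Vec (M + 1)) × (Fin n → ℝ) |
        ∀ i, a * ((∑ j : Fin M, (p.1 i (Fin.castSucc j)) ^ 2) + 1) < p.2 i} := by
      rw [Set.setOf_forall]
      exact isOpen_iInter_of_finite fun i => isOpen_lt (hcont i) (hcont2 i)
    have hsub : {p : (Fin n → Vec (M + 1)) × (Fin n → ℝ) |
        ∀ i, a * ((∑ j : Fin M, (p.1 i (Fin.castSucc j)) ^ 2) + 1) < p.2 i} ⊆ S := by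
      intro p hp
      have hpos : ∀ i, 0 < a * ((∑ j : Fin M, (p.1 i (Fin.castSucc j)) ^ 2) + 1) := by
        intro i
        have h0 : (0:ℝ) ≤ ∑ j : Fin M, (p.1 i (Fin.castSucc j)) ^ 2 :=
          Finset.sum_nonneg fun _ _ => sq_nonneg _
        nlinarith
      exact ⟨fun i => ((hpos i).trans (hp i)).le, fun i => (hp i).le⟩
    refine interior_maximal hsub hU ?_
    intro i
    have h0 : (∑ j : Fin M, (((0 : Vec (M + 1))) (Fin.castSucc j)) ^ 2) = (0:ℝ) :=
      Finset.sum_eq_zero fun j _ => by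
        have hz : ((0 : Vec (M + 1)) (Fin.castSucc j) : ℝ) = 0 := rfl
        rw [hz]; ring
    show a * ((∑ j : Fin M, (((0 : Vec (M + 1))) (Fin.castSucc j)) ^ 2) + 1) < a + 1
    rw [h0]; linarith
  -- convexity in (x_v, λ_v)
  · intro ν η ξs
    have hF1 : ConvexOn ℝ Set.univ (fun p : (Fin n → Vec (M + 1)) × (Fin n → ℝ) =>
        ε ^ 2 / (n : ℝ) * ∑ i, p.2 i) := by
      refine convexOn_univ_of_affine' fun x y s t hst => ?_
      show ε ^ 2 / (n : ℝ) * ∑ i, (s * x.2 i + t * y.2 i)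
          = s * (ε ^ 2 / (n : ℝ) * ∑ i, x.2 i) + t * (ε ^ 2 / (n : ℝ) * ∑ i, y.2 i)
      rw [Finset.sum_add_distrib, ← Finset.mul_sum, ← Finset.mul_sum]
      ring
    have hF2sum : ConvexOn ℝ Set.univ (fun p : (Fin n → Vec (M + 1)) × (Fin n → ℝ) =>
        ∑ k : Fin N, (a * (ξs k (Fin.last M)
          - ((∑ i : Fin M, ξs k (Fin.castSucc i) * p.1 (v k) (Fin.castSucc i))
            + p.1 (v k) (Fin.last M))) ^ 2
          - p.2 (v k) * ‖ξs k - ξhat k‖ ^ 2)) := by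
      refine convexOn_finset_sum' _ fun k _ => ConvexOn.sub ?_ ?_
      · refine convexOn_univ_sq_affine' ha.le fun x y s t hst => ?_
        have ht' : t = 1 - s := by linarith
        subst ht'
        show ξs k (Fin.last M)
            - ((∑ i : Fin M, ξs k (Fin.castSucc i)
                * (s * x.1 (v k) (Fin.castSucc i) + (1-s) * y.1 (v k) (Fin.castSucc i)))
              + (s * x.1 (v k) (Fin.last M) + (1-s) * y.1 (v k) (Fin.last M)))
          = s * (ξs k (Fin.last M)
              - ((∑ i : Fin M, ξs k (Fin.castSucc i) * x.1 (v k) (Fin.castSucc i))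
                + x.1 (v k) (Fin.last M)))
            + (1-s) * (ξs k (Fin.last M)
              - ((∑ i : Fin M, ξs k (Fin.castSucc i) * y.1 (v k) (Fin.castSucc i))
                + y.1 (v k) (Fin.last M)))
        have hsum : ∑ i : Fin M, ξs k (Fin.castSucc i)
              * (s * x.1 (v k) (Fin.castSucc i) + (1-s) * y.1 (v k) (Fin.castSucc i))
            = s * ∑ i : Fin M, ξs k (Fin.castSucc i) * x.1 (v k) (Fin.castSucc i)
              + (1-s) * ∑ i : Fin M, ξs k (Fin.castSucc i) * y.1 (v k) (Fin.castSucc i) := by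
          rw [Finset.mul_sum, Finset.mul_sum, ← Finset.sum_add_distrib]
          exact Finset.sum_congr rfl fun i _ => by ring
        rw [hsum]
        ring
      · refine concaveOn_univ_of_affine' fun x y s t hst => ?_
        show (s * x.2 (v k) + t * y.2 (v k)) * ‖ξs k - ξhat k‖ ^ 2
            = s * (x.2 (v k) * ‖ξs k - ξhat k‖ ^ 2) + t * (y.2 (v k) * ‖ξs k - ξhat k‖ ^ 2)
        ring
    have hF2 : ConvexOn ℝ Set.univ (fun p : (Fin n → Vec (M + 1)) × (Fin n → ℝ) =>
        (1 / (N : ℝ)) * ∑ k : Fin N, (a * (ξs k (Fin.last M)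
          - ((∑ i : Fin M, ξs k (Fin.castSucc i) * p.1 (v k) (Fin.castSucc i))
            + p.1 (v k) (Fin.last M))) ^ 2
          - p.2 (v k) * ‖ξs k - ξhat k‖ ^ 2)) :=
      convexOn_smul_const' hF2sum (by positivity)
    have hmv : ∀ (w1 w2 : Fin n → ℝ) (s t : ℝ) (i : Fin n),
        Lap.mulVec (s • w1 + t • w2) i = s * Lap.mulVec w1 i + t * Lap.mulVec w2 i := by
      intro w1 w2 s t i
      rw [Matrix.mulVec_add, Matrix.mulVec_smul, Matrix.mulVec_smul]
      simp
    have hF3 : ConvexOn ℝ Set.univ (fun p : (Fin n → Vec (M + 1)) × (Fin n → ℝ) =>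
        ∑ i, ν i * Lap.mulVec p.2 i) := by
      refine convexOn_univ_of_affine' fun x y s t hst => ?_
      show ∑ i, ν i * Lap.mulVec (s • x.2 + t • y.2) i
          = s * ∑ i, ν i * Lap.mulVec x.2 i + t * ∑ i, ν i * Lap.mulVec y.2 i
      rw [Finset.mul_sum, Finset.mul_sum, ← Finset.sum_add_distrib]
      exact Finset.sum_congr rfl fun i _ => by rw [hmv]; ring
    have hF4 : ConvexOn ℝ Set.univ (fun p : (Fin n → Vec (M + 1)) × (Fin n → ℝ) =>
        ∑ i, (inner ℝ (η i) (∑ j : Fin n, Lap i j • p.1 j) : ℝ)) := by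
      refine convexOn_univ_of_affine' fun x y s t hst => ?_
      show ∑ i, (inner ℝ (η i) (∑ j : Fin n, Lap i j • (s • x.1 j + t • y.1 j)) : ℝ)
          = s * ∑ i, (inner ℝ (η i) (∑ j : Fin n, Lap i j • x.1 j) : ℝ)
            + t * ∑ i, (inner ℝ (η i) (∑ j : Fin n, Lap i j • y.1 j) : ℝ)
      rw [Finset.mul_sum, Finset.mul_sum, ← Finset.sum_add_distrib]
      refine Finset.sum_congr rfl fun i _ => ?_
      have hvec : (∑ j : Fin n, Lap i j • (s • x.1 j + t • y.1 j))
          = s • (∑ j : Fin n, Lap i j • x.1 j) + t • (∑ j : Fin n, Lap i j • y.1 j) := by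
        rw [Finset.smul_sum, Finset.smul_sum, ← Finset.sum_add_distrib]
        exact Finset.sum_congr rfl fun j _ => by module
      rw [hvec, inner_add_right, real_inner_smul_right, real_inner_smul_right]
    have hF5 : ConvexOn ℝ Set.univ (fun p : (Fin n → Vec (M + 1)) × (Fin n → ℝ) =>
        (1 / 2 : ℝ) * ∑ i, (inner ℝ (p.1 i) (∑ j : Fin n, Lap i j • p.1 j) : ℝ)) := by
      have e5 : (fun p : (Fin n → Vec (M + 1)) × (Fin n → ℝ) =>
          (1 / 2 : ℝ) * ∑ i, (inner ℝ (p.1 i) (∑ j : Fin n, Lap i j • p.1 j) : ℝ))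
          = fun p => (1 / 2 : ℝ) * qlapAux Lap p.1 p.1 := by
        funext p; rw [qlapAux_eq]
      rw [e5]
      refine convexOn_smul_const' ?_ (by norm_num)
      refine convexOn_univ_quad' (fun x y s t hst => ?_) (fun z => qlapAux_nonneg hLpsd z.1)
      show qlapAux Lap (s • x.1 + t • y.1) (s • x.1 + t • y.1)
          = s * qlapAux Lap x.1 x.1 + t * qlapAux Lap y.1 y.1
            - s * t * qlapAux Lap (x.1 - y.1) (x.1 - y.1)
      have ht' : t = 1 - s := by linarith
      subst ht'
      rw [qlapAux_expand, qlapAux_sub_expand, qlapAux_comm hLsym y.1 x.1]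
      ring
    have hF6 : ConvexOn ℝ Set.univ (fun p : (Fin n → Vec (M + 1)) × (Fin n → ℝ) =>
        (1 / 2 : ℝ) * ∑ i, p.2 i * Lap.mulVec p.2 i) := by
      have e6 : (fun p : (Fin n → Vec (M + 1)) × (Fin n → ℝ) =>
          (1 / 2 : ℝ) * ∑ i, p.2 i * Lap.mulVec p.2 i)
          = fun p => (1 / 2 : ℝ) * qsAux Lap p.2 p.2 := by
        funext p; rw [qsAux_eq]
      rw [e6]
      refine convexOn_smul_const' ?_ (by norm_num)
      refine convexOn_univ_quad' (fun x y s t hst => ?_) (fun z => qsAux_nonneg hLpsd z.2)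
      show qsAux Lap (s • x.2 + t • y.2) (s • x.2 + t • y.2)
          = s * qsAux Lap x.2 x.2 + t * qsAux Lap y.2 y.2
            - s * t * qsAux Lap (x.2 - y.2) (x.2 - y.2)
      have ht' : t = 1 - s := by linarith
      subst ht'
      rw [qsAux_expand, qsAux_sub_expand, qsAux_comm hLsym y.2 x.2]
      ring
    have hcombo := ((((hF1.add hF2).add hF3).add hF4).add hF5).add hF6
    have hEq4 : (fun p : (Fin n → Vec (M + 1)) × (Fin n → ℝ) =>
        Ltld ε f ξhat v Lap p.1 p.2 ν η ξs)
        = (fun p : (Fin n → Vec (M + 1)) × (Fin n → ℝ) =>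
          ε ^ 2 / (n : ℝ) * ∑ i, p.2 i
            + (1 / (N : ℝ)) * ∑ k : Fin N, (a * (ξs k (Fin.last M)
                - ((∑ i : Fin M, ξs k (Fin.castSucc i) * p.1 (v k) (Fin.castSucc i))
                  + p.1 (v k) (Fin.last M))) ^ 2
                - p.2 (v k) * ‖ξs k - ξhat k‖ ^ 2)
            + ∑ i, ν i * Lap.mulVec p.2 i
            + ∑ i, (inner ℝ (η i) (∑ j : Fin n, Lap i j • p.1 j) : ℝ)
            + (1 / 2 : ℝ) * ∑ i, (inner ℝ (p.1 i) (∑ j : Fin n, Lap i j • p.1 j) : ℝ)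
            + (1 / 2 : ℝ) * ∑ i, p.2 i * Lap.mulVec p.2 i) := by
      funext p
      simp only [Ltld, gk, hf]
    rw [hEq4]
    exact hcombo.subset (Set.subset_univ _) hSconv
  -- concavity in (ν, η, ξs)
  · intro xv lv h1 h2
    have hG1 : ConcaveOn ℝ Set.univ
        (fun _ : (Fin n → ℝ) × (Fin n → Vec (M + 1)) × (Fin N → Vec (M + 1)) =>
          ε ^ 2 / (n : ℝ) * ∑ i, lv i) := concaveOn_const _ convex_univ
    have hG2sum : ConcaveOn ℝ Set.univ
        (fun q : (Fin n → ℝ) × (Fin n → Vec (M + 1)) × (Fin N → Vec (M + 1)) =>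
          ∑ k : Fin N, (a * (q.2.2 k (Fin.last M)
            - ((∑ i : Fin M, q.2.2 k (Fin.castSucc i) * xv (v k) (Fin.castSucc i))
              + xv (v k) (Fin.last M))) ^ 2
            - lv (v k) * ‖q.2.2 k - ξhat k‖ ^ 2)) := by
      refine concaveOn_finset_sum' _ fun k _ => ?_
      exact concaveOn_comp_affine'
        (T := fun q : (Fin n → ℝ) × (Fin n → Vec (M + 1)) × (Fin N → Vec (M + 1)) => q.2.2 k)
        (fun x y s t _ _ _ => rfl)
        (ls_concaveOnAux ha.le (xv (v k)) (ξhat k) (h2 (v k)))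
    have hG2 : ConcaveOn ℝ Set.univ
        (fun q : (Fin n → ℝ) × (Fin n → Vec (M + 1)) × (Fin N → Vec (M + 1)) =>
          (1 / (N : ℝ)) * ∑ k : Fin N, (a * (q.2.2 k (Fin.last M)
            - ((∑ i : Fin M, q.2.2 k (Fin.castSucc i) * xv (v k) (Fin.castSucc i))
              + xv (v k) (Fin.last M))) ^ 2
            - lv (v k) * ‖q.2.2 k - ξhat k‖ ^ 2)) :=
      concaveOn_smul_const' hG2sum (by positivity)
    have hG3 : ConcaveOn ℝ Set.univ
        (fun q : (Fin n → ℝ) × (Fin n → Vec (M + 1)) × (Fin N → Vec (M + 1)) =>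
          ∑ i, q.1 i * Lap.mulVec lv i) := by
      refine concaveOn_univ_of_affine' fun x y s t hst => ?_
      show ∑ i, (s * x.1 i + t * y.1 i) * Lap.mulVec lv i
          = s * ∑ i, x.1 i * Lap.mulVec lv i + t * ∑ i, y.1 i * Lap.mulVec lv i
      rw [Finset.mul_sum, Finset.mul_sum, ← Finset.sum_add_distrib]
      exact Finset.sum_congr rfl fun i _ => by ring
    have hG4 : ConcaveOn ℝ Set.univ
        (fun q : (Fin n → ℝ) × (Fin n → Vec (M + 1)) × (Fin N → Vec (M + 1)) =>
          ∑ i, (inner ℝ (q.2.1 i) (∑ j : Fin n, Lap i j • xv j) : ℝ)) := by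
      refine concaveOn_univ_of_affine' fun x y s t hst => ?_
      show ∑ i, (inner ℝ (s • x.2.1 i + t • y.2.1 i) (∑ j : Fin n, Lap i j • xv j) : ℝ)
          = s * ∑ i, (inner ℝ (x.2.1 i) (∑ j : Fin n, Lap i j • xv j) : ℝ)
            + t * ∑ i, (inner ℝ (y.2.1 i) (∑ j : Fin n, Lap i j • xv j) : ℝ)
      rw [Finset.mul_sum, Finset.mul_sum, ← Finset.sum_add_distrib]
      refine Finset.sum_congr rfl fun i _ => ?_
      rw [inner_add_left, real_inner_smul_left, real_inner_smul_left]
    have hG5 : ConcaveOn ℝ Set.univ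
        (fun _ : (Fin n → ℝ) × (Fin n → Vec (M + 1)) × (Fin N → Vec (M + 1)) =>
          (1 / 2 : ℝ) * ∑ i, (inner ℝ (xv i) (∑ j : Fin n, Lap i j • xv j) : ℝ)) :=
      concaveOn_const _ convex_univ
    have hG6 : ConcaveOn ℝ Set.univ
        (fun _ : (Fin n → ℝ) × (Fin n → Vec (M + 1)) × (Fin N → Vec (M + 1)) =>
          (1 / 2 : ℝ) * ∑ i, lv i * Lap.mulVec lv i) := concaveOn_const _ convex_univ
    have hcombo := ((((hG1.add hG2).add hG3).add hG4).add hG5).add hG6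
    have hEq5 : (fun q : (Fin n → ℝ) × (Fin n → Vec (M + 1)) × (Fin N → Vec (M + 1)) =>
        Ltld ε f ξhat v Lap xv lv q.1 q.2.1 q.2.2)
        = (fun q : (Fin n → ℝ) × (Fin n → Vec (M + 1)) × (Fin N → Vec (M + 1)) =>
          ε ^ 2 / (n : ℝ) * ∑ i, lv i
            + (1 / (N : ℝ)) * ∑ k : Fin N, (a * (q.2.2 k (Fin.last M)
                - ((∑ i : Fin M, q.2.2 k (Fin.castSucc i) * xv (v k) (Fin.castSucc i))
                  + xv (v k) (Fin.last M))) ^ 2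
                - lv (v k) * ‖q.2.2 k - ξhat k‖ ^ 2)
            + ∑ i, q.1 i * Lap.mulVec lv i
            + ∑ i, (inner ℝ (q.2.1 i) (∑ j : Fin n, Lap i j • xv j) : ℝ)
            + (1 / 2 : ℝ) * ∑ i, (inner ℝ (xv i) (∑ j : Fin n, Lap i j • xv j) : ℝ)
            + (1 / 2 : ℝ) * ∑ i, lv i * Lap.mulVec lv i) := by
      funext q
      simp only [Ltld, gk, hf]
    rw [hEq5]
    exact hcombo

end
end

section
/- Suppose f is continuously differentiable, x ↦ f(x, ξ) is convex for every ξ ∈ ℝ^m, C ⊆ ℝ^{nd} × ℝ_{≥0}ⁿ is closed and convex, and L̃_aug is convex-concave on C × (ℝⁿ × ℝ^{nd} × ℝ^{mN}), i.e., convex in (x_v, λ_v) ∈ C for fixed (ν, η, {ξ^k}) and concave in (ν, η, {ξ^k}) for fixed (x_v, λ_v) ∈ C. Let (x_v*, λ_v*, ν*, η*, {(ξ*)^k}) be a saddle point of L̃_aug over C × (ℝⁿ × ℝ^{nd} × ℝ^{mN}) with (x_v*, λ_v*) in the interior of C, and suppose that for every k the map ξ ↦ g_k((x_v*)^{v_k},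 (λ_v*)^{v_k}, ξ) is strongly concave. If (x_v, λ_v) ∈ C and (ν, η, {ξ^k}) ∈ ℝⁿ × ℝ^{nd} × ℝ^{mN} satisfy L̃_aug(x_v*, λ_v*, ν, η, {ξ^k}) = L̃_aug(x_v*, λ_v*, ν*, η*, {(ξ*)^k}) = L̃_aug(x_v, λ_v, ν*, η*, {(ξ*)^k}), then ξ^k = (ξ*)^k for all k ∈ {1, …, N}, and there exist x ∈ ℝ^d and λ ∈ ℝ such that x_v = 𝟙ₙ ⊗ x and λ_v = λ𝟙ₙ. -/
open scoped BigOperators RealInnerProductSpace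
open Finset

noncomputable section

lemma psd_nonneg {n : ℕ} {Lap : Matrix (Fin n) (Fin n) ℝ} (h : Lap.PosSemidef)
    (w : Fin n → ℝ) : 0 ≤ ∑ i, w i * Lap.mulVec w i := by
  simpa [dotProduct] using h.dotProduct_mulVec_nonneg w

lemma psd_zero {n : ℕ} {Lap : Matrix (Fin n) (Fin n) ℝ} (h : Lap.PosSemidef)
    (w : Fin n → ℝ) (hw : ∑ i, w i * Lap.mulVec w i = 0) : Lap.mulVec w = 0 := by
  apply (h.dotProduct_mulVec_zero_iff w).mp
  simpa [dotProduct] using hw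

lemma ql_expand {n : ℕ} (Lap : Matrix (Fin n) (Fin n) ℝ) (a b : Fin n → ℝ) :
    ∑ i, a i * Lap.mulVec b i = ∑ i, ∑ j, Lap i j * a i * b j := by
  simp only [Matrix.mulVec, dotProduct, Finset.mul_sum]
  exact Finset.sum_congr rfl fun i _ => Finset.sum_congr rfl fun j _ => by ring

lemma ql_mid {n : ℕ} (Lap : Matrix (Fin n) (Fin n) ℝ) (a b : Fin n → ℝ) :
    ∑ i, ((1/2 : ℝ) * a i + (1/2 : ℝ) * b i) *
        Lap.mulVec (fun j => (1/2 : ℝ) * a j + (1/2 : ℝ) * b j) i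
      = (1/2) * (∑ i, a i * Lap.mulVec a i) + (1/2) * (∑ i, b i * Lap.mulVec b i)
        - (1/4) * (∑ i, (a i - b i) * Lap.mulVec (fun j => a j - b j) i) := by
  simp only [ql_expand]
  rw [Finset.mul_sum, Finset.mul_sum, Finset.mul_sum, ← Finset.sum_add_distrib,
    ← Finset.sum_sub_distrib]
  refine Finset.sum_congr rfl fun i _ => ?_
  rw [Finset.mul_sum, Finset.mul_sum, Finset.mul_sum, ← Finset.sum_add_distrib,
    ← Finset.sum_sub_distrib]
  exact Finset.sum_congr rfl fun j _ => by ring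

lemma qx_expand {n d : ℕ} (Lap : Matrix (Fin n) (Fin n) ℝ) (a b : Fin n → Vec d) :
    ∑ i, (inner ℝ (a i) (∑ j : Fin n, Lap i j • b j) : ℝ)
      = ∑ i, ∑ j, Lap i j * (inner ℝ (a i) (b j) : ℝ) := by
  refine Finset.sum_congr rfl fun i _ => ?_
  rw [inner_sum]
  exact Finset.sum_congr rfl fun j _ => real_inner_smul_right _ _ _

lemma qx_mid {n d : ℕ} (Lap : Matrix (Fin n) (Fin n) ℝ) (a b : Fin n → Vec d) :
    ∑ i, (inner ℝ ((1/2 : ℝ) • a i + (1/2 : ℝ) • b i)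
        (∑ j : Fin n, Lap i j • ((1/2 : ℝ) • a j + (1/2 : ℝ) • b j)) : ℝ)
      = (1/2) * (∑ i, (inner ℝ (a i) (∑ j : Fin n, Lap i j • a j) : ℝ))
        + (1/2) * (∑ i, (inner ℝ (b i) (∑ j : Fin n, Lap i j • b j) : ℝ))
        - (1/4) * (∑ i, (inner ℝ (a i - b i) (∑ j : Fin n, Lap i j • (a j - b j)) : ℝ)) := by
  simp only [qx_expand]
  rw [Finset.mul_sum, Finset.mul_sum, Finset.mul_sum, ← Finset.sum_add_distrib,
    ← Finset.sum_sub_distrib]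
  refine Finset.sum_congr rfl fun i _ => ?_
  rw [Finset.mul_sum, Finset.mul_sum, Finset.mul_sum, ← Finset.sum_add_distrib,
    ← Finset.sum_sub_distrib]
  refine Finset.sum_congr rfl fun j _ => ?_
  simp only [inner_add_left, inner_add_right, inner_sub_left, inner_sub_right,
    real_inner_smul_left, real_inner_smul_right]
  ring

lemma qx_coord {n d : ℕ} (Lap : Matrix (Fin n) (Fin n) ℝ) (a : Fin n → Vec d) :
    ∑ i, (inner ℝ (a i) (∑ j : Fin n, Lap i j • a j) : ℝ)
      = ∑ t : Fin d, ∑ i, (a i t) * Lap.mulVec (fun j => a j t) i := by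
  rw [qx_expand]
  calc ∑ i, ∑ j, Lap i j * (inner ℝ (a i) (a j) : ℝ)
      = ∑ i, ∑ t : Fin d, ∑ j, Lap i j * (a i t) * (a j t) := by
        refine Finset.sum_congr rfl fun i _ => ?_
        rw [Finset.sum_comm]
        refine Finset.sum_congr rfl fun j _ => ?_
        rw [PiLp.inner_apply, Finset.mul_sum]
        refine Finset.sum_congr rfl fun t _ => ?_
        simp [RCLike.inner_apply]
        ring
    _ = ∑ t : Fin d, ∑ i, ∑ j, Lap i j * (a i t) * (a j t) := by rw [Finset.sum_comm]
    _ = ∑ t : Fin d, ∑ i, (a i t) * Lap.mulVec (fun j => a j t) i := by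
        refine Finset.sum_congr rfl fun t _ => ?_
        rw [ql_expand]

lemma strong_mid {m : ℕ} (g : Vec m → ℝ) (μ : ℝ) (hμ : 0 < μ)
    (hc : ConcaveOn ℝ Set.univ (fun ξ => g ξ + μ / 2 * ‖ξ‖ ^ 2)) (a b : Vec m) :
    (1/2) * g a + (1/2) * g b + μ/8 * ‖a - b‖^2 ≤ g ((1/2 : ℝ) • a + (1/2 : ℝ) • b) := by
  have h := hc.2 (Set.mem_univ a) (Set.mem_univ b) (by norm_num : (0:ℝ) ≤ 1/2)
    (by norm_num : (0:ℝ) ≤ 1/2) (by norm_num : (1/2 : ℝ) + 1/2 = 1)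
  simp only [smul_eq_mul] at h
  have hmid : (1/2 : ℝ) • a + (1/2 : ℝ) • b = (1/2 : ℝ) • (a + b) := by
    rw [smul_add]
  have hp := parallelogram_law_with_norm ℝ a b
  have hn : ‖(1/2 : ℝ) • a + (1/2 : ℝ) • b‖^2
      = (1/2)*‖a‖^2 + (1/2)*‖b‖^2 - (1/4)*‖a-b‖^2 := by
    rw [hmid, norm_smul]
    simp only [Real.norm_eq_abs]
    rw [abs_of_pos (by norm_num : (0:ℝ) < 1/2)]
    nlinarith [hp, norm_nonneg (a+b)]
  nlinarith [h, hn]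

lemma key_identity {d m n N : ℕ} (ε : ℝ) (f : Vec d → Vec m → ℝ) (ξhat : Fin N → Vec m)
    (v : Fin N → Fin n) (Lap : Matrix (Fin n) (Fin n) ℝ)
    (xvs xv : Fin n → Vec d) (lvs lv νs : Fin n → ℝ) (ηs : Fin n → Vec d)
    (ξss : Fin N → Vec m) :
    Ltld ε f ξhat v Lap (fun i => (1/2 : ℝ) • xvs i + (1/2 : ℝ) • xv i)
        (fun i => (1/2 : ℝ) * lvs i + (1/2 : ℝ) * lv i) νs ηs ξss
      = (1/2) * Ltld ε f ξhat v Lap xvs lvs νs ηs ξss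
        + (1/2) * Ltld ε f ξhat v Lap xv lv νs ηs ξss
        - (1/8) * (∑ i, (inner ℝ (xvs i - xv i) (∑ j : Fin n, Lap i j • (xvs j - xv j)) : ℝ))
        - (1/8) * (∑ i, (lvs i - lv i) * Lap.mulVec (fun j => lvs j - lv j) i)
        + (1/(N:ℝ)) * ((∑ k, f ((1/2 : ℝ) • xvs (v k) + (1/2 : ℝ) • xv (v k)) (ξss k))
            - ((1/2) * ∑ k, f (xvs (v k)) (ξss k) + (1/2) * ∑ k, f (xv (v k)) (ξss k))) := by
  have hmv : ∀ i, Lap.mulVec (fun j => (1/2 : ℝ) * lvs j + (1/2 : ℝ) * lv j) i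
      = (1/2) * Lap.mulVec lvs i + (1/2) * Lap.mulVec lv i := by
    intro i
    simp only [Matrix.mulVec, dotProduct]
    rw [Finset.mul_sum, Finset.mul_sum, ← Finset.sum_add_distrib]
    exact Finset.sum_congr rfl fun j _ => by ring
  have hLx : ∀ i, (∑ j : Fin n, Lap i j • ((1/2 : ℝ) • xvs j + (1/2 : ℝ) • xv j))
      = (1/2 : ℝ) • (∑ j : Fin n, Lap i j • xvs j) + (1/2 : ℝ) • (∑ j : Fin n, Lap i j • xv j) := by
    intro i
    rw [Finset.smul_sum, Finset.smul_sum, ← Finset.sum_add_distrib]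
    refine Finset.sum_congr rfl fun j _ => ?_
    rw [smul_add, smul_comm, smul_comm (Lap i j)]
  have h1 : ∑ i, ((1/2 : ℝ) * lvs i + (1/2 : ℝ) * lv i)
      = (1/2) * ∑ i, lvs i + (1/2) * ∑ i, lv i := by
    rw [Finset.sum_add_distrib, Finset.mul_sum, Finset.mul_sum]
  have h2 : ∑ k, gk f ξhat k ((1/2 : ℝ) • xvs (v k) + (1/2 : ℝ) • xv (v k))
        ((1/2 : ℝ) * lvs (v k) + (1/2 : ℝ) * lv (v k)) (ξss k)
      = (∑ k, f ((1/2 : ℝ) • xvs (v k) + (1/2 : ℝ) • xv (v k)) (ξss k))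
        - ((1/2) * ∑ k, lvs (v k) * ‖ξss k - ξhat k‖ ^ 2
            + (1/2) * ∑ k, lv (v k) * ‖ξss k - ξhat k‖ ^ 2) := by
    have hl : ∑ k, ((1/2 : ℝ) * lvs (v k) + (1/2 : ℝ) * lv (v k)) * ‖ξss k - ξhat k‖ ^ 2
        = (1/2) * ∑ k, lvs (v k) * ‖ξss k - ξhat k‖ ^ 2
          + (1/2) * ∑ k, lv (v k) * ‖ξss k - ξhat k‖ ^ 2 := by
      rw [Finset.mul_sum, Finset.mul_sum, ← Finset.sum_add_distrib]
      exact Finset.sum_congr rfl fun k _ => by ring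
    simp only [gk]
    rw [Finset.sum_sub_distrib, hl]
  have h3 : ∑ i, νs i * Lap.mulVec (fun j => (1/2 : ℝ) * lvs j + (1/2 : ℝ) * lv j) i
      = (1/2) * ∑ i, νs i * Lap.mulVec lvs i + (1/2) * ∑ i, νs i * Lap.mulVec lv i := by
    rw [Finset.mul_sum, Finset.mul_sum, ← Finset.sum_add_distrib]
    refine Finset.sum_congr rfl fun i _ => ?_
    rw [hmv i]; ring
  have h4 : ∑ i, (inner ℝ (ηs i)
        (∑ j : Fin n, Lap i j • ((1/2 : ℝ) • xvs j + (1/2 : ℝ) • xv j)) : ℝ)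
      = (1/2) * ∑ i, (inner ℝ (ηs i) (∑ j : Fin n, Lap i j • xvs j) : ℝ)
        + (1/2) * ∑ i, (inner ℝ (ηs i) (∑ j : Fin n, Lap i j • xv j) : ℝ) := by
    rw [Finset.mul_sum, Finset.mul_sum, ← Finset.sum_add_distrib]
    refine Finset.sum_congr rfl fun i _ => ?_
    rw [hLx i, inner_add_right, real_inner_smul_right, real_inner_smul_right]
  have h5 : ∀ (a : Fin n → Vec d) (b : Fin n → ℝ),
      ∑ k, gk f ξhat k (a (v k)) (b (v k)) (ξss k)
        = ∑ k, f (a (v k)) (ξss k) - ∑ k, b (v k) * ‖ξss k - ξhat k‖ ^ 2 := by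
    intro a b
    simp only [gk, Finset.sum_sub_distrib]
  simp only [Ltld]
  rw [qx_mid, ql_mid, h1, h2, h3, h4, h5 xvs lvs, h5 xv lv]
  ring

set_option maxHeartbeats 1000000 in
/-- at a saddle point of L̃_aug interior to C with strongly concave
inner maximizations, points achieving equality of the saddle values satisfy
ξ^k = (ξ*)^k for all k and are consensus points: x_v = 𝟙ₙ ⊗ x, λ_v = λ𝟙ₙ. -/
theorem invariant_set_characterization
    {d m n N : ℕ} (hn : 0 < n) (hN : 0 < N)
    (f : Vec d → Vec m → ℝ) (ξhat : Fin N → Vec m) (ε : ℝ) (hε : 0 < ε)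
    (hf : ContDiff ℝ 1 (Function.uncurry f))
    (hconv : ∀ ξ : Vec m, ConvexOn ℝ Set.univ (fun x => f x ξ))
    (v : Fin N → Fin n) (hv : Function.Surjective v)
    (Lap : Matrix (Fin n) (Fin n) ℝ) (hLsym : Lap.IsSymm) (hLpsd : Lap.PosSemidef)
    (hLker : ∀ w : Fin n → ℝ, Lap.mulVec w = 0 ↔ ∃ c : ℝ, w = fun _ => c)
    (C : Set ((Fin n → Vec d) × (Fin n → ℝ)))
    (hCclosed : IsClosed C) (hCconv : Convex ℝ C)
    (hCsub : ∀ p ∈ C, ∀ i, 0 ≤ p.2 i)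
    (hcc₁ : ∀ (ν : Fin n → ℝ) (η : Fin n → Vec d) (ξs : Fin N → Vec m),
      ConvexOn ℝ C (fun p : (Fin n → Vec d) × (Fin n → ℝ) =>
        Ltld ε f ξhat v Lap p.1 p.2 ν η ξs))
    (hcc₂ : ∀ p ∈ C, ConcaveOn ℝ Set.univ
      (fun q : (Fin n → ℝ) × (Fin n → Vec d) × (Fin N → Vec m) =>
        Ltld ε f ξhat v Lap p.1 p.2 q.1 q.2.1 q.2.2))
    (xvs : Fin n → Vec d) (lvs νs : Fin n → ℝ) (ηs : Fin n → Vec d)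
    (ξss : Fin N → Vec m)
    (hint : ((xvs, lvs) : (Fin n → Vec d) × (Fin n → ℝ)) ∈ interior C)
    (hsaddle₁ : ∀ (ν : Fin n → ℝ) (η : Fin n → Vec d) (ξs : Fin N → Vec m),
      Ltld ε f ξhat v Lap xvs lvs ν η ξs ≤ Ltld ε f ξhat v Lap xvs lvs νs ηs ξss)
    (hsaddle₂ : ∀ p ∈ C,
      Ltld ε f ξhat v Lap xvs lvs νs ηs ξss ≤ Ltld ε f ξhat v Lap p.1 p.2 νs ηs ξss)
    (hstrong : ∀ k : Fin N, ∃ μ : ℝ, 0 < μ ∧ ConcaveOn ℝ Set.univ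
      (fun ξ : Vec m => gk f ξhat k (xvs (v k)) (lvs (v k)) ξ + μ / 2 * ‖ξ‖ ^ 2))
    (xv : Fin n → Vec d) (lv ν : Fin n → ℝ) (η : Fin n → Vec d) (ξs : Fin N → Vec m)
    (hmem : ((xv, lv) : (Fin n → Vec d) × (Fin n → ℝ)) ∈ C)
    (heq₁ : Ltld ε f ξhat v Lap xvs lvs ν η ξs
      = Ltld ε f ξhat v Lap xvs lvs νs ηs ξss)
    (heq₂ : Ltld ε f ξhat v Lap xvs lvs νs ηs ξss
      = Ltld ε f ξhat v Lap xv lv νs ηs ξss) :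
    (∀ k : Fin N, ξs k = ξss k) ∧
    (∃ (x : Vec d) (lam : ℝ), xv = (fun _ => x) ∧ lv = (fun _ => lam)) := by
  have hNinv : (0:ℝ) < 1 / (N : ℝ) := by positivity
  -- ### Part 1: ξs = ξss
  have hxi : ∀ k : Fin N, ξs k = ξss k := by
    have hdiff : ∀ (ν' : Fin n → ℝ) (η' : Fin n → Vec d) (a : Fin N → Vec m),
        Ltld ε f ξhat v Lap xvs lvs ν' η' a
          = Ltld ε f ξhat v Lap xvs lvs ν' η' ξss
            + (1/(N:ℝ)) * ((∑ k, gk f ξhat k (xvs (v k)) (lvs (v k)) (a k))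
                - ∑ k, gk f ξhat k (xvs (v k)) (lvs (v k)) (ξss k)) := by
      intro ν' η' a
      simp only [Ltld]
      ring
    have hmax : ∀ a : Fin N → Vec m,
        (∑ k, gk f ξhat k (xvs (v k)) (lvs (v k)) (a k))
          ≤ ∑ k, gk f ξhat k (xvs (v k)) (lvs (v k)) (ξss k) := by
      intro a
      have h := hsaddle₁ νs ηs a
      rw [hdiff νs ηs a] at h
      by_contra hc
      push_neg at hc
      nlinarith [mul_pos hNinv (sub_pos.mpr hc)]
    have hGeq : (∑ k, gk f ξhat k (xvs (v k)) (lvs (v k)) (ξs k))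
        = ∑ k, gk f ξhat k (xvs (v k)) (lvs (v k)) (ξss k) := by
      have h1 := hsaddle₁ ν η ξss
      rw [hdiff ν η ξs] at heq₁
      refine le_antisymm (hmax ξs) ?_
      by_contra hc
      push_neg at hc
      nlinarith [mul_pos hNinv (sub_pos.mpr hc)]
    intro k
    by_contra hne
    choose μ hμpos hμconc using hstrong
    have hj : ∀ j : Fin N,
        (1/2) * gk f ξhat j (xvs (v j)) (lvs (v j)) (ξs j)
          + (1/2) * gk f ξhat j (xvs (v j)) (lvs (v j)) (ξss j)
          + μ j / 8 * ‖ξs j - ξss j‖^2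
        ≤ gk f ξhat j (xvs (v j)) (lvs (v j)) ((1/2 : ℝ) • ξs j + (1/2 : ℝ) • ξss j) :=
      fun j => strong_mid _ (μ j) (hμpos j) (hμconc j) _ _
    have hsum := Finset.sum_le_sum (fun j (_ : j ∈ univ) => hj j)
    rw [Finset.sum_add_distrib, Finset.sum_add_distrib, ← Finset.mul_sum, ← Finset.mul_sum]
      at hsum
    have hpos : 0 < ∑ j, μ j / 8 * ‖ξs j - ξss j‖^2 := by
      refine Finset.sum_pos' (fun j _ => mul_nonneg (div_nonneg (hμpos j).le (by norm_num))
        (sq_nonneg _)) ⟨k, Finset.mem_univ k, ?_⟩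
      have hnrm : 0 < ‖ξs k - ξss k‖ := norm_pos_iff.mpr (sub_ne_zero.mpr hne)
      exact mul_pos (div_pos (hμpos k) (by norm_num)) (pow_pos hnrm 2)
    have hm := hmax (fun j => (1/2 : ℝ) • ξs j + (1/2 : ℝ) • ξss j)
    linarith [hGeq, hsum, hpos, hm]
  refine ⟨hxi, ?_⟩
  -- ### Step A : Lap.mulVec lvs = 0
  have hstepA : Lap.mulVec lvs = 0 := by
    have h := hsaddle₁ (fun i => νs i + Lap.mulVec lvs i) ηs ξss
    simp only [Ltld] at h
    have hexp : ∑ i, (νs i + Lap.mulVec lvs i) * Lap.mulVec lvs i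
        = ∑ i, νs i * Lap.mulVec lvs i + ∑ i, (Lap.mulVec lvs i)^2 := by
      rw [← Finset.sum_add_distrib]
      exact Finset.sum_congr rfl fun i _ => by ring
    rw [hexp] at h
    have hle : ∑ i, (Lap.mulVec lvs i)^2 ≤ 0 := by linarith
    have h0 : ∀ i ∈ univ, (0:ℝ) ≤ (Lap.mulVec lvs i)^2 := fun i _ => sq_nonneg _
    funext i
    have := (Finset.sum_eq_zero_iff_of_nonneg h0).mp
      (le_antisymm hle (Finset.sum_nonneg h0)) i (Finset.mem_univ i)
    simpa using sq_eq_zero_iff.mp this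
  -- ### Step B : ∀ i, ∑ j, Lap i j • xvs j = 0
  have hstepB : ∀ i, (∑ j : Fin n, Lap i j • xvs j) = 0 := by
    have h := hsaddle₁ νs (fun i => ηs i + ∑ j : Fin n, Lap i j • xvs j) ξss
    simp only [Ltld] at h
    have hexp : ∑ i, (inner ℝ (ηs i + ∑ j : Fin n, Lap i j • xvs j)
          (∑ j : Fin n, Lap i j • xvs j) : ℝ)
        = ∑ i, (inner ℝ (ηs i) (∑ j : Fin n, Lap i j • xvs j) : ℝ)
          + ∑ i, ‖∑ j : Fin n, Lap i j • xvs j‖^2 := by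
      rw [← Finset.sum_add_distrib]
      refine Finset.sum_congr rfl fun i _ => ?_
      rw [inner_add_left, real_inner_self_eq_norm_sq]
    rw [hexp] at h
    have hle : ∑ i, ‖∑ j : Fin n, Lap i j • xvs j‖^2 ≤ 0 := by linarith
    have h0 : ∀ i ∈ univ, (0:ℝ) ≤ ‖∑ j : Fin n, Lap i j • xvs j‖^2 := fun i _ => sq_nonneg _
    intro i
    have := (Finset.sum_eq_zero_iff_of_nonneg h0).mp
      (le_antisymm hle (Finset.sum_nonneg h0)) i (Finset.mem_univ i)
    exact norm_eq_zero.mp (sq_eq_zero_iff.mp this ▸ rfl)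
  -- ### midpoint equals saddle value
  have hCs : ((xvs, lvs) : (Fin n → Vec d) × (Fin n → ℝ)) ∈ C := interior_subset hint
  have hpair : (1/2 : ℝ) • ((xvs, lvs) : (Fin n → Vec d) × (Fin n → ℝ)) + (1/2 : ℝ) • (xv, lv)
      = ((fun i => (1/2 : ℝ) • xvs i + (1/2 : ℝ) • xv i),
         (fun i => (1/2 : ℝ) * lvs i + (1/2 : ℝ) * lv i)) := by
    refine Prod.ext ?_ ?_ <;> funext i <;> simp [smul_eq_mul]
  have hmid_mem : (((fun i => (1/2 : ℝ) • xvs i + (1/2 : ℝ) • xv i),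
      (fun i => (1/2 : ℝ) * lvs i + (1/2 : ℝ) * lv i)) :
      (Fin n → Vec d) × (Fin n → ℝ)) ∈ C := by
    rw [← hpair]
    exact hCconv hCs hmem (by norm_num) (by norm_num) (by norm_num)
  have hup := (hcc₁ νs ηs ξss).2 hCs hmem (by norm_num : (0:ℝ) ≤ 1/2)
    (by norm_num : (0:ℝ) ≤ 1/2) (by norm_num : (1/2 : ℝ) + 1/2 = 1)
  rw [hpair] at hup
  simp only [smul_eq_mul] at hup
  have hdown := hsaddle₂ _ hmid_mem
  have hMeq : Ltld ε f ξhat v Lap (fun i => (1/2 : ℝ) • xvs i + (1/2 : ℝ) • xv i)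
      (fun i => (1/2 : ℝ) * lvs i + (1/2 : ℝ) * lv i) νs ηs ξss
      = Ltld ε f ξhat v Lap xvs lvs νs ηs ξss := by
    refine le_antisymm ?_ hdown
    calc _ ≤ 1/2 * Ltld ε f ξhat v Lap xvs lvs νs ηs ξss
        + 1/2 * Ltld ε f ξhat v Lap xv lv νs ηs ξss := hup
      _ = _ := by rw [← heq₂]; ring
  -- ### extract vanishing of the quadratic forms
  have hfk : ∀ k : Fin N, f ((1/2 : ℝ) • xvs (v k) + (1/2 : ℝ) • xv (v k)) (ξss k)
      ≤ (1/2) * f (xvs (v k)) (ξss k) + (1/2) * f (xv (v k)) (ξss k) := by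
    intro k
    have h := (hconv (ξss k)).2 (Set.mem_univ (xvs (v k))) (Set.mem_univ (xv (v k)))
      (by norm_num : (0:ℝ) ≤ 1/2) (by norm_num : (0:ℝ) ≤ 1/2)
      (by norm_num : (1/2 : ℝ) + 1/2 = 1)
    simpa [smul_eq_mul] using h
  have hslack : (∑ k, f ((1/2 : ℝ) • xvs (v k) + (1/2 : ℝ) • xv (v k)) (ξss k))
      - ((1/2) * ∑ k, f (xvs (v k)) (ξss k) + (1/2) * ∑ k, f (xv (v k)) (ξss k)) ≤ 0 := by
    have := Finset.sum_le_sum (fun k (_ : k ∈ univ) => hfk k)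
    rw [Finset.sum_add_distrib, ← Finset.mul_sum, ← Finset.mul_sum] at this
    linarith
  have hkey := key_identity ε f ξhat v Lap xvs xv lvs lv νs ηs ξss
  rw [hMeq, ← heq₂] at hkey
  have hQd0 : (0:ℝ) ≤ ∑ i, (inner ℝ (xvs i - xv i)
      (∑ j : Fin n, Lap i j • (xvs j - xv j)) : ℝ) := by
    rw [qx_coord]
    refine Finset.sum_nonneg fun t _ => ?_
    exact psd_nonneg hLpsd _
  have hqd0 : (0:ℝ) ≤ ∑ i, (lvs i - lv i) * Lap.mulVec (fun j => lvs j - lv j) i :=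
    psd_nonneg hLpsd _
  have hslack' : (1/(N:ℝ)) * ((∑ k, f ((1/2 : ℝ) • xvs (v k) + (1/2 : ℝ) • xv (v k)) (ξss k))
      - ((1/2) * ∑ k, f (xvs (v k)) (ξss k) + (1/2) * ∑ k, f (xv (v k)) (ξss k))) ≤ 0 :=
    mul_nonpos_of_nonneg_of_nonpos (le_of_lt hNinv) hslack
  have hQzero : (∑ i, (inner ℝ (xvs i - xv i)
      (∑ j : Fin n, Lap i j • (xvs j - xv j)) : ℝ)) = 0 := by linarith
  have hqzero : (∑ i, (lvs i - lv i) * Lap.mulVec (fun j => lvs j - lv j) i) = 0 := by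
    linarith
  -- ### consensus for lv
  have hdl : Lap.mulVec (fun j => lvs j - lv j) = 0 := psd_zero hLpsd _ hqzero
  have hlv : Lap.mulVec lv = 0 := by
    funext i
    have h1 := congrFun hstepA i
    have h2 := congrFun hdl i
    simp only [Matrix.mulVec, dotProduct, Pi.zero_apply] at h1 h2 ⊢
    have : ∑ j, Lap i j * (lvs j - lv j) = ∑ j, Lap i j * lvs j - ∑ j, Lap i j * lv j := by
      rw [← Finset.sum_sub_distrib]
      exact Finset.sum_congr rfl fun j _ => by ring
    rw [this] at h2
    linarith
  obtain ⟨cl, hcl⟩ := (hLker lv).mp hlv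
  -- ### consensus for xv
  have hQcoord := qx_coord Lap (fun i => xvs i - xv i)
  rw [hQzero] at hQcoord
  have hts : ∀ t : Fin d, Lap.mulVec (fun j => (xvs j - xv j) t) = 0 := by
    intro t
    refine psd_zero hLpsd _ ?_
    have h0 : ∀ t ∈ (univ : Finset (Fin d)),
        (0:ℝ) ≤ ∑ i, ((xvs i - xv i) t) * Lap.mulVec (fun j => (xvs j - xv j) t) i :=
      fun t _ => psd_nonneg hLpsd _
    exact (Finset.sum_eq_zero_iff_of_nonneg h0).mp hQcoord.symm t (Finset.mem_univ t)
  have hxv_t : ∀ t : Fin d, Lap.mulVec (fun j => xv j t) = 0 := by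
    intro t
    funext i
    have h2 := congrFun (hts t) i
    have h1 : ∑ j, Lap i j * xvs j t = 0 := by
      have := congrArg (fun z => z t) (hstepB i)
      have happ : (∑ j : Fin n, Lap i j • xvs j) t = ∑ j, Lap i j * xvs j t := by
        rw [WithLp.ofLp_sum, Finset.sum_apply]
        exact Finset.sum_congr rfl fun j _ => rfl
      rw [happ] at this
      simpa using this
    simp only [Matrix.mulVec, dotProduct, Pi.zero_apply] at h2 ⊢
    have hsub : ∀ j, (xvs j - xv j) t = xvs j t - xv j t := fun j => rfl
    simp only [hsub] at h2
    have : ∑ j, Lap i j * (xvs j t - xv j t)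
        = ∑ j, Lap i j * xvs j t - ∑ j, Lap i j * xv j t := by
      rw [← Finset.sum_sub_distrib]
      exact Finset.sum_congr rfl fun j _ => by ring
    rw [this] at h2
    linarith
  refine ⟨xv ⟨0, hn⟩, cl, ?_, ?_⟩
  · funext j
    have : ∀ t : Fin d, xv j t = xv ⟨0, hn⟩ t := by
      intro t
      obtain ⟨c, hc⟩ := (hLker _).mp (hxv_t t)
      rw [congrFun hc j, congrFun hc ⟨0, hn⟩]
    exact PiLp.ext this
  · exact hcl


end
end
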